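/- On a Communication Homogeneous Failure Homogeneous platform, for any interval mapping with processor groups A_1,…,A_p, let k = min_j |A_j|. Then the single-interval mapping on the k fastest processors has (i) failure probability q^k ≤ 1 - ∏_{j=1}^p (1 - q^{|A_j|}) and (ii) latency k·δ_0/b + W/s_k + δ_n/b no larger than the latency of the original mapping. -/

import Mathlib

/-- on a Communication Homogeneous, Failure Homogeneous platform
(common failure probability `q`, common bandwidth `b`, speeds sorted in
non-increasing order), for any interval mapping with processor groups
`A_1,…,A_p`, works `W_j ≥ 0`, input communication sizes `d_j ≥ 0` with
`d_1 = δ₀`, letting `k = min_j |A_j|`, the single-interval mapping on the `k`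
fastest processors has
(i) failure probability `q^k ≤ 1 - ∏_j (1 - q^{|A_j|})`, and
(ii) latency `k·δ₀/b + W/s_k + δₙ/b` no larger than the latency
`Σ_j (|A_j|·d_j/b + W_j/min_{u∈A_j} s_u) + δₙ/b` of the original mapping,
where `s_k = min` speed of the `k` fastest processors. -/
theorem no_split_lemma_comm_hom_failure_hom
    (m p : ℕ) (hp : 0 < p)
    (s : Fin m → ℝ) (hs : Antitone s) (hspos : ∀ u, 0 < s u)
    (q b δ0 δn : ℝ) (hq0 : 0 ≤ q) (hq1 : q < 1) (hb : 0 < b)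
    (hδ0 : 0 ≤ δ0) (hδn : 0 ≤ δn)
    (A : Fin p → Finset (Fin m)) (hA : ∀ j, (A j).Nonempty)
    (Wj : Fin p → ℝ) (hWj : ∀ j, 0 ≤ Wj j)
    (d : Fin p → ℝ) (hd : ∀ j, 0 ≤ d j) (hd0 : d ⟨0, hp⟩ = δ0)
    (k : ℕ) (hkmin : ∀ j, k ≤ (A j).card) (hkex : ∃ j, (A j).card = k)
    (hkne : (Finset.univ.filter fun u : Fin m => (u : ℕ) < k).Nonempty) :
    q ^ k ≤ 1 - ∏ j : Fin p, (1 - q ^ (A j).card) ∧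
      (k : ℝ) * δ0 / b +
          (∑ j, Wj j) /
            ((Finset.univ.filter fun u : Fin m => (u : ℕ) < k).inf' hkne s) +
          δn / b ≤
        (∑ j, (((A j).card : ℝ) * d j / b + Wj j / (A j).inf' (hA j) s)) +
          δn / b := by
  have hq1' : ∀ n : ℕ, q ^ n ≤ 1 := fun n =>
    pow_le_one₀ hq0 (le_of_lt hq1)
  have hqn : ∀ n : ℕ, 0 ≤ q ^ n := fun n => pow_nonneg hq0 n
  constructor
  · -- failure probability
    obtain ⟨j0, hj0⟩ := hkex
    have hprod : ∏ j : Fin p, (1 - q ^ (A j).card) ≤ 1 - q ^ k := by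
      rw [← Finset.mul_prod_erase Finset.univ _ (Finset.mem_univ j0), hj0]
      have h1 : ∏ j ∈ Finset.univ.erase j0, (1 - q ^ (A j).card) ≤ 1 :=
        Finset.prod_le_one (fun i _ => by linarith [hq1' (A i).card])
          (fun i _ => by linarith [hqn (A i).card])
      have h2 : 0 ≤ 1 - q ^ k := by linarith [hq1' k]
      nlinarith [Finset.prod_nonneg (fun i (_ : i ∈ Finset.univ.erase j0) =>
        by linarith [hq1' (A i).card] : ∀ i ∈ Finset.univ.erase j0, (0:ℝ) ≤ 1 - q ^ (A i).card)]
    linarith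
  · set F := Finset.univ.filter fun u : Fin m => (u : ℕ) < k with hF
    set sk := F.inf' hkne s with hsk
    have hskpos : 0 < sk := by
      rw [hsk, Finset.lt_inf'_iff]
      exact fun u _ => hspos u
    -- each group's min speed is ≤ sk
    have hinf : ∀ j, (A j).inf' (hA j) s ≤ sk := by
      intro j
      obtain ⟨v0, hv0F, hv0⟩ := Finset.exists_mem_eq_inf' hkne s
      -- exists u ∈ A j with v0 ≤ u
      have hcardF : ∀ t : ℕ, ((Finset.univ.filter fun u : Fin m => (u : ℕ) < t)).card ≤ t := by
        intro t
        have : ((Finset.univ.filter fun u : Fin m => (u : ℕ) < t)).card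
            ≤ (Finset.range t).card :=
          Finset.card_le_card_of_injOn (fun u : Fin m => (u : ℕ))
            (fun u hu => by
              simp only [Finset.coe_filter, Finset.mem_filter, Finset.mem_univ, true_and, Set.mem_setOf_eq] at hu
              exact Finset.mem_range.mpr hu)
            (fun a _ b _ h => Fin.ext h)
        exact le_trans this (le_of_eq (Finset.card_range t))
      have hv0k : (v0 : ℕ) < k := by
        rw [hF] at hv0F
        simpa using hv0F
      obtain ⟨u, huA, huge⟩ : ∃ u ∈ A j, (v0 : ℕ) ≤ (u : ℕ) := by
        by_contra hcon
        push_neg at hcon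
        have hsub : A j ⊆ Finset.univ.filter fun u : Fin m => (u : ℕ) < (v0 : ℕ) := by
          intro u hu
          simp only [Finset.mem_filter, Finset.mem_univ, true_and]
          exact hcon u hu
        have := Finset.card_le_card hsub
        have := hcardF (v0 : ℕ)
        have := hkmin j
        omega
      have : s u ≤ s v0 := hs (by exact_mod_cast huge)
      calc (A j).inf' (hA j) s ≤ s u := Finset.inf'_le s huA
        _ ≤ s v0 := this
        _ = sk := hv0.symm
    have hinfpos : ∀ j, 0 < (A j).inf' (hA j) s := by
      intro j
      rw [Finset.lt_inf'_iff]
      exact fun u _ => hspos u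
    have h2 : (∑ j, Wj j) / sk ≤ ∑ j, Wj j / (A j).inf' (hA j) s := by
      rw [Finset.sum_div]
      apply Finset.sum_le_sum
      intro j _
      gcongr
      · exact hWj j
      · exact hinfpos j
      · exact hinf j
    have h1 : (k : ℝ) * δ0 / b ≤ ∑ j, ((A j).card : ℝ) * d j / b := by
      have hterm : (k : ℝ) * δ0 / b ≤ ((A ⟨0, hp⟩).card : ℝ) * d ⟨0, hp⟩ / b := by
        rw [hd0]
        gcongr
        exact_mod_cast hkmin ⟨0, hp⟩
      refine le_trans hterm (Finset.single_le_sum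
        (f := fun j => ((A j).card : ℝ) * d j / b)
        (fun j _ => div_nonneg (mul_nonneg (Nat.cast_nonneg _) (hd j)) hb.le)
        (Finset.mem_univ (⟨0, hp⟩ : Fin p)))
    have hsplit : (∑ j, (((A j).card : ℝ) * d j / b + Wj j / (A j).inf' (hA j) s))
        = (∑ j, ((A j).card : ℝ) * d j / b) + ∑ j, Wj j / (A j).inf' (hA j) s :=
      Finset.sum_add_distrib
    rw [hsplit]
    linarith
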